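/- Let (G, sI, λ) be a synthesis game for a specification φ ⊆ Σ^ω with parity objective Φ = Parity(p), and let Es ⊆ E2 be a safety assumption that is safe-sufficient for sI and Φ. Then ψ_Es is a sufficient environment assumption for safety(prefixes(φ)), i.e., the language (Σ^ω ∖ ψ_Es) ∪ safety(prefixes(φ)) is Moore realizable. In particular, if φ is a safety language, then ψ_Es is a sufficient environment assumption for φ. -/

import Mathlib

open scoped Classical
noncomputable section

/-! ### Languages of infinite words: prefixes, safety, liveness -/

/-- The finite prefix of length `n` of an infinite word `w`. -/
def wordPrefix {A : Type} (w : ℕ → A) (n : ℕ) : List A := (List.range n).map w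

/-- The set of finite prefixes of words of `L`. -/
def prefixes {A : Type} (L : Set (ℕ → A)) : Set (List A) :=
  {v | ∃ w ∈ L, v = wordPrefix w v.length}

/-- The set of infinite limits of a set of finite words: all infinite words
whose every finite prefix lies in `P`. -/
def safetyCl {A : Type} (P : Set (List A)) : Set (ℕ → A) :=
  {w | ∀ n : ℕ, wordPrefix w n ∈ P}

/-- A language of infinite words is a safety language if it equals the
safety closure of its set of prefixes. -/
def IsSafetyLang {A : Type} (L : Set (ℕ → A)) : Prop := L = safetyCl (prefixes L)

/-- A language of infinite words is a liveness language if every finite word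
is a prefix of some word of the language. -/
def IsLivenessLang {A : Type} (L : Set (ℕ → A)) : Prop := prefixes L = Set.univ

/-! ### Deterministic two-player games on graphs -/

/-- The set of states occurring infinitely often in a play. -/
def infSet {S : Type} (π : ℕ → S) : Set S :=
  {t | ∀ N : ℕ, ∃ k : ℕ, N ≤ k ∧ π k = t}

/-- Parity objective: the minimal priority occurring infinitely often is even. -/
def ParityObj {S : Type} (p : S → ℕ) : Set (ℕ → S) :=
  {π | Even (sInf (p '' infSet π))}

/-- Co-parity objective: the minimal priority occurring infinitely often is odd.
This is the complement of `ParityObj p`. -/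
def CoparityObj {S : Type} (p : S → ℕ) : Set (ℕ → S) :=
  {π | Odd (sInf (p '' infSet π))}

/-- Safety objective: only states of `F` are visited. -/
def SafeObj {S : Type} (F : Set S) : Set (ℕ → S) := {π | ∀ k : ℕ, π k ∈ F}

/-- Reachability objective: some state of `F` is visited. -/
def ReachObj {S : Type} (F : Set S) : Set (ℕ → S) := {π | ∃ k : ℕ, π k ∈ F}

/-- Büchi objective: some state of `F` is visited infinitely often. -/
def BuchiObj {S : Type} (F : Set S) : Set (ℕ → S) := {π | ∃ t ∈ F, t ∈ infSet π}

/-- A deterministic game graph: a finite directed graph in which every state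
has at least one successor, together with the set `S1` of player-1 states
(the remaining states belong to player 2). -/
structure DetGame (S : Type) [Fintype S] where
  E : S → S → Prop
  S1 : Set S
  exists_succ : ∀ s : S, ∃ t : S, E s t

namespace DetGame

variable {S : Type} [Fintype S]

/-- Player-2 states. -/
def S2 (G : DetGame S) : Set S := G.S1ᶜ

/-- A play: an infinite sequence of states following edges. -/
def IsPlay (G : DetGame S) (π : ℕ → S) : Prop := ∀ k : ℕ, G.E (π k) (π (k + 1))

/-- A strategy for player 1: given the history of states strictly before the
current state, and the current state, it chooses a successor, which must be
along an edge whenever the current state is a player-1 state. -/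
structure Strat1 (G : DetGame S) where
  f : List S → S → S
  valid : ∀ (h : List S) (s : S), s ∈ G.S1 → G.E s (f h s)

/-- A strategy for player 2. -/
structure Strat2 (G : DetGame S) where
  f : List S → S → S
  valid : ∀ (h : List S) (s : S), s ∈ G.S2 → G.E s (f h s)

/-- A memoryless strategy depends only on the current state. -/
def Strat1.Memoryless {G : DetGame S} (α : Strat1 G) : Prop :=
  ∀ (h h' : List S) (s : S), α.f h s = α.f h' s

def Strat2.Memoryless {G : DetGame S} (β : Strat2 G) : Prop :=
  ∀ (h h' : List S) (s : S), β.f h s = β.f h' s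

/-- The (history, current state) pair after `k` steps of the play from `s`
where player 1 follows `α` and player 2 follows `β`. -/
def histPair (G : DetGame S) (α : Strat1 G) (β : Strat2 G) (s : S) :
    ℕ → List S × S
  | 0 => ([], s)
  | k + 1 =>
    let p := histPair G α β s k
    (p.1 ++ [p.2], if p.2 ∈ G.S1 then α.f p.1 p.2 else β.f p.1 p.2)

/-- The unique play from `s` when player 1 follows `α` and player 2 follows `β`. -/
def outcome (G : DetGame S) (s : S) (α : Strat1 G) (β : Strat2 G) : ℕ → S :=
  fun k => (histPair G α β s k).2

/-- Sure winning set of player 1 for objective `Φ`. -/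
def Win1 (G : DetGame S) (Φ : Set (ℕ → S)) : Set S :=
  {s | ∃ α : Strat1 G, ∀ β : Strat2 G, G.outcome s α β ∈ Φ}

/-- Sure winning set of player 2 for objective `Φ`. -/
def Win2 (G : DetGame S) (Φ : Set (ℕ → S)) : Set S :=
  {s | ∃ β : Strat2 G, ∀ α : Strat1 G, G.outcome s α β ∈ Φ}

/-- Cooperative winning set: both players together can achieve `Φ`. -/
def Win12 (G : DetGame S) (Φ : Set (ℕ → S)) : Set S :=
  {s | ∃ (α : Strat1 G) (β : Strat2 G), G.outcome s α β ∈ Φ}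

/-- The set of player-2 edges. -/
def E2 (G : DetGame S) : Set (S × S) := {e | G.E e.1 e.2 ∧ e.1 ∈ G.S2}

/-- The objective "either some forbidden edge of `Es` is taken, or the play
remains in the safety component `Safe(Win12(Φ))` of `Φ`". -/
def AssumeSafe (G : DetGame S) (Es : Set (S × S)) (Φ : Set (ℕ → S)) :
    Set (ℕ → S) :=
  {π | (∃ i : ℕ, (π i, π (i + 1)) ∈ Es) ∨ π ∈ SafeObj (G.Win12 Φ)}

/-- A safety assumption `Es` is safe-sufficient for a state `s` and an
objective `Φ` if player 1 wins `AssumeSafe Es Φ` from `s`. -/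
def SafeSufficient (G : DetGame S) (Es : Set (S × S)) (s : S)
    (Φ : Set (ℕ → S)) : Prop :=
  s ∈ G.Win1 (G.AssumeSafe Es Φ)

/-- A safety assumption `Es` is restrictive for `s` and `Φ` if some pair of
strategies produces a play that uses an edge of `Es` and stays in the safety
component of `Φ`. -/
def Restrictive (G : DetGame S) (Es : Set (S × S)) (s : S)
    (Φ : Set (ℕ → S)) : Prop :=
  ∃ (α : Strat1 G) (β : Strat2 G),
    (∃ i : ℕ, (G.outcome s α β i, G.outcome s α β (i + 1)) ∈ Es) ∧
      G.outcome s α β ∈ SafeObj (G.Win12 Φ)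

/-- The objective "either the strong fairness assumption on `El` is violated
(some source state of an edge in `El` repeats forever while the target of
that edge does not), or `Φ` holds". -/
def AssumeFair (G : DetGame S) (El : Set (S × S)) (Φ : Set (ℕ → S)) :
    Set (ℕ → S) :=
  {π | (∃ e ∈ El, e.1 ∈ infSet π ∧ e.2 ∉ infSet π) ∨ π ∈ Φ}

end DetGame

/-! ### Transducers and synthesis games -/

/-- A Moore transducer with input alphabet `Set I` and output alphabet `Set O`. -/
structure Moore (I O : Type) where
  Q : Type
  fin : Finite Q
  qI : Q
  tr : Q → Set I → Q
  out : Q → Set O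

namespace Moore

variable {I O : Type} (T : Moore I O)

/-- The run of the transducer over an infinite input word. -/
def run (w : ℕ → Set I) : ℕ → T.Q
  | 0 => T.qI
  | i + 1 => T.tr (run w i) (w i)

/-- The infinite word over `Set I × Set O` generated by the run on `w`. -/
def output (w : ℕ → Set I) : ℕ → Set I × Set O :=
  fun i => (w i, T.out (T.run w i))

/-- The language of the transducer. -/
def lang : Set (ℕ → Set I × Set O) := {x | ∃ w : ℕ → Set I, x = T.output w}

end Moore

/-- A specification is (Moore) realizable if some Moore transducer
implements it. -/
def MooreRealizable {I O : Type} (L : Set (ℕ → Set I × Set O)) : Prop :=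
  ∃ T : Moore I O, T.lang ⊆ L

/-- `ψ` is a sufficient environment assumption for `φ` if `ψᶜ ∪ φ` is
(Moore) realizable. -/
def SufficientAssumption {I O : Type} (φ ψ : Set (ℕ → Set I × Set O)) : Prop :=
  MooreRealizable (ψᶜ ∪ φ)

/-- A Mealy transducer with input alphabet `Set O` and output alphabet `Set I`
(an environment). -/
structure Mealy (I O : Type) where
  Q : Type
  fin : Finite Q
  qI : Q
  tr : Q → Set O → Q
  out : Q → Set O → Set I

namespace Mealy

variable {I O : Type} (T : Mealy I O)

def run (w : ℕ → Set O) : ℕ → T.Q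
  | 0 => T.qI
  | i + 1 => T.tr (run w i) (w i)

def output (w : ℕ → Set O) : ℕ → Set I × Set O :=
  fun i => (T.out (T.run w i) (w i), w i)

def lang : Set (ℕ → Set I × Set O) := {x | ∃ w : ℕ → Set O, x = T.output w}

end Mealy

/-- `ψ` is realizable for the environment if some Mealy transducer with
input alphabet `Set O` and output alphabet `Set I` implements it. -/
def EnvRealizable {I O : Type} (ψ : Set (ℕ → Set I × Set O)) : Prop :=
  ∃ T : Mealy I O, T.lang ⊆ ψ

/-- A synthesis game: a bipartite deterministic game graph with an initial
player-1 state, whose player-1 states are labeled by input letters and whose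
player-2 states are labeled by output letters, deterministic and complete
with respect to the labels. -/
structure SynthGame (S : Type) [Fintype S] (I O : Type) extends DetGame S where
  sI : S
  sI_mem : sI ∈ S1
  bipartite : ∀ s t : S, E s t → (s ∈ S1 ∧ t ∉ S1) ∨ (s ∉ S1 ∧ t ∈ S1)
  labI : S → Set I
  labO : S → Set O
  labelDet1 : ∀ s t t' : S, s ∈ S1 → E s t → E s t' → labO t = labO t' → t = t'
  labelDet2 : ∀ s t t' : S, s ∉ S1 → E s t → E s t' → labI t = labI t' → t = t'
  complete1 : ∀ s ∈ S1, ∀ o : Set O, ∃ t : S, E s t ∧ labO t = o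
  complete2 : ∀ s ∉ S1, ∀ i : Set I, ∃ t : S, E s t ∧ labI t = i

namespace SynthGame

variable {S I O : Type} [Fintype S] (SG : SynthGame S I O)

/-- The infinite word over `Set I × Set O` corresponding to a play from `sI`. -/
def word (π : ℕ → S) : ℕ → Set I × Set O :=
  fun i => (SG.labI (π (2 * i + 2)), SG.labO (π (2 * i + 1)))

/-- `SG` with priority function `p` is a synthesis game for the specification
`φ`: a play from `sI` satisfies the parity objective iff its word is in `φ`. -/
def IsGameFor (p : S → ℕ) (φ : Set (ℕ → Set I × Set O)) : Prop :=
  ∀ π : ℕ → S, SG.toDetGame.IsPlay π → π 0 = SG.sI →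
    (π ∈ ParityObj p ↔ SG.word π ∈ φ)

/-- The environment assumption defined by a safety assumption `Es`:
words of plays from `sI` never using an edge of `Es`. -/
def psiSafety (Es : Set (S × S)) : Set (ℕ → Set I × Set O) :=
  {w | ∃ π : ℕ → S, SG.toDetGame.IsPlay π ∧ π 0 = SG.sI ∧ SG.word π = w ∧
    ∀ i : ℕ, (π i, π (i + 1)) ∉ Es}

/-- The environment assumption defined by a strongly fair assumption `El`:
words of plays from `sI` in which, for every edge of `El`, either the source
occurs only finitely often or the edge is taken infinitely often. -/
def psiFair (El : Set (S × S)) : Set (ℕ → Set I × Set O) :=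
  {w | ∃ π : ℕ → S, SG.toDetGame.IsPlay π ∧ π 0 = SG.sI ∧ SG.word π = w ∧
    ∀ e ∈ El, e.1 ∉ infSet π ∨
      ∀ N : ℕ, ∃ k : ℕ, N ≤ k ∧ π k = e.1 ∧ π (k + 1) = e.2}

end SynthGame

namespace CHJ

open DetGame

variable {S : Type} [Fintype S]

/-- Levels of the player-1 attractor to the edge set `Es`. -/
def Rlev (G : DetGame S) (Es : Set (S × S)) : ℕ → Set S
  | 0 => ∅
  | n + 1 =>
      {s | (s ∈ G.S1 ∧ ∃ t, G.E s t ∧ t ∈ Rlev G Es n) ∨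
        (s ∉ G.S1 ∧ ∀ t, G.E s t → ((s, t) ∈ Es ∨ t ∈ Rlev G Es n))}

def Rset (G : DetGame S) (Es : Set (S × S)) : Set S := ⋃ n, Rlev G Es n

lemma Rlev_succ_mono (G : DetGame S) (Es : Set (S × S)) :
    ∀ n, Rlev G Es n ⊆ Rlev G Es (n + 1) := by
  intro n
  induction n with
  | zero => simp [Rlev]
  | succ n ih =>
    intro s hs
    rcases hs with ⟨h1, t, ht, htn⟩ | ⟨h1, hall⟩
    · exact Or.inl ⟨h1, t, ht, ih htn⟩
    · exact Or.inr ⟨h1, fun t ht => (hall t ht).imp id (fun h => ih h)⟩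

lemma Rlev_mono (G : DetGame S) (Es : Set (S × S)) {m n : ℕ} (h : m ≤ n) :
    Rlev G Es m ⊆ Rlev G Es n := by
  induction n with
  | zero => simp_all
  | succ n ih =>
    rcases Nat.lt_or_ge m (n+1) with h' | h'
    · exact fun s hs => Rlev_succ_mono G Es n (ih (Nat.lt_succ_iff.mp h') hs)
    · have : m = n + 1 := le_antisymm h h'
      subst this; exact fun s hs => hs

lemma mem_Rset_of_lev {G : DetGame S} {Es : Set (S × S)} {s : S} {n : ℕ}
    (h : s ∈ Rlev G Es n) : s ∈ Rset G Es := Set.mem_iUnion.mpr ⟨n, h⟩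

lemma mem_Rlev_succ_iff {G : DetGame S} {Es : Set (S × S)} {s : S} {n : ℕ} :
    s ∈ Rlev G Es (n + 1) ↔
      ((s ∈ G.S1 ∧ ∃ t, G.E s t ∧ t ∈ Rlev G Es n) ∨
        (s ∉ G.S1 ∧ ∀ t, G.E s t → ((s, t) ∈ Es ∨ t ∈ Rlev G Es n))) := Iff.rfl

lemma not_mem_Rset_S1 {G : DetGame S} {Es : Set (S × S)} {s t : S}
    (hs : s ∉ Rset G Es) (hs1 : s ∈ G.S1) (ht : G.E s t) : t ∉ Rset G Es := by
  intro hmem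
  rcases Set.mem_iUnion.mp hmem with ⟨n, hn⟩
  exact hs (mem_Rset_of_lev (mem_Rlev_succ_iff.mpr (Or.inl ⟨hs1, t, ht, hn⟩)))

lemma not_mem_Rset_S2 {G : DetGame S} {Es : Set (S × S)} {s : S}
    (hs : s ∉ Rset G Es) (hs1 : s ∉ G.S1) :
    ∃ t, G.E s t ∧ (s, t) ∉ Es ∧ t ∉ Rset G Es := by
  by_contra hcon
  push_neg at hcon
  set g : S → ℕ := fun t => sInf {n | t ∈ Rlev G Es n} with hg
  set N : ℕ := Finset.univ.sup g with hN
  apply hs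
  apply mem_Rset_of_lev (n := N + 1)
  refine Or.inr ⟨hs1, fun t ht => ?_⟩
  by_cases hEs : (s, t) ∈ Es
  · exact Or.inl hEs
  · right
    have htR : t ∈ Rset G Es := hcon t ht hEs
    rcases Set.mem_iUnion.mp htR with ⟨n, hn⟩
    have hne : {n | t ∈ Rlev G Es n}.Nonempty := ⟨n, hn⟩
    have hmem : t ∈ Rlev G Es (g t) := Nat.sInf_mem hne
    exact Rlev_mono G Es (Finset.le_sup (Finset.mem_univ t)) hmem

/-- Levels of the safe-region computation (greatest fixpoint iteration). -/
def Ylev (G : DetGame S) (Es : Set (S × S)) (W : Set S) : ℕ → Set S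
  | 0 => Set.univ
  | n + 1 =>
      {s | s ∈ Rset G Es ∨ (s ∈ W ∧
        (s ∈ G.S1 → ∃ t, G.E s t ∧ t ∈ Ylev G Es W n) ∧
        (s ∉ G.S1 → ∀ t, G.E s t → ((s, t) ∈ Es ∨ t ∈ Ylev G Es W n)))}

def Yset (G : DetGame S) (Es : Set (S × S)) (W : Set S) : Set S :=
  ⋂ n, Ylev G Es W n

lemma mem_Ylev_succ_iff {G : DetGame S} {Es : Set (S × S)} {W : Set S} {s : S} {n : ℕ} :
    s ∈ Ylev G Es W (n + 1) ↔
      (s ∈ Rset G Es ∨ (s ∈ W ∧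
        (s ∈ G.S1 → ∃ t, G.E s t ∧ t ∈ Ylev G Es W n) ∧
        (s ∉ G.S1 → ∀ t, G.E s t → ((s, t) ∈ Es ∨ t ∈ Ylev G Es W n)))) := Iff.rfl

lemma Ylev_succ_anti (G : DetGame S) (Es : Set (S × S)) (W : Set S) :
    ∀ n, Ylev G Es W (n + 1) ⊆ Ylev G Es W n := by
  intro n
  induction n with
  | zero => simp [Ylev]
  | succ n ih =>
    intro s hs
    rcases hs with h | ⟨hW, h1, h2⟩
    · exact Or.inl h
    · refine Or.inr ⟨hW, fun hs1 => ?_, fun hs1 t ht => ?_⟩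
      · rcases h1 hs1 with ⟨t, ht, htY⟩; exact ⟨t, ht, ih htY⟩
      · exact (h2 hs1 t ht).imp id (fun h => ih h)

lemma Ylev_anti (G : DetGame S) (Es : Set (S × S)) (W : Set S) {m n : ℕ}
    (h : m ≤ n) : Ylev G Es W n ⊆ Ylev G Es W m := by
  induction n with
  | zero => simp_all
  | succ n ih =>
    rcases Nat.lt_or_ge m (n+1) with h' | h'
    · exact fun s hs => ih (Nat.lt_succ_iff.mp h') (Ylev_succ_anti G Es W n hs)
    · have : m = n + 1 := le_antisymm h h'
      subst this; exact fun s hs => hs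

lemma Rset_subset_Ylev (G : DetGame S) (Es : Set (S × S)) (W : Set S) :
    ∀ n, Rset G Es ⊆ Ylev G Es W n := by
  intro n
  cases n with
  | zero => simp [Ylev]
  | succ n => exact fun s hs => Or.inl hs

lemma Rset_subset_Yset (G : DetGame S) (Es : Set (S × S)) (W : Set S) :
    Rset G Es ⊆ Yset G Es W :=
  fun s hs => Set.mem_iInter.mpr fun n => Rset_subset_Ylev G Es W n hs

lemma Yset_succ {G : DetGame S} {Es : Set (S × S)} {W : Set S} {s : S}
    (h : s ∈ Yset G Es W) (hR : s ∉ Rset G Es) :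
    s ∈ W ∧ (s ∈ G.S1 → ∃ t, G.E s t ∧ t ∈ Yset G Es W) ∧
      (s ∉ G.S1 → ∀ t, G.E s t → ((s, t) ∈ Es ∨ t ∈ Yset G Es W)) := by
  have hlev : ∀ n, s ∈ Ylev G Es W n := fun n => Set.mem_iInter.mp h n
  have hclause : ∀ n, s ∈ W ∧
      (s ∈ G.S1 → ∃ t, G.E s t ∧ t ∈ Ylev G Es W n) ∧
      (s ∉ G.S1 → ∀ t, G.E s t → ((s, t) ∈ Es ∨ t ∈ Ylev G Es W n)) := by
    intro n
    rcases hlev (n+1) with hc | hc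
    · exact absurd hc hR
    · exact hc
  refine ⟨(hclause 0).1, fun hs1 => ?_, fun hs1 t ht => ?_⟩
  · -- pigeonhole over the (finitely many) witnesses
    have hch : ∀ n : ℕ, ∃ t, G.E s t ∧ t ∈ Ylev G Es W n :=
      fun n => (hclause n).2.1 hs1
    choose f hf1 hf2 using hch
    obtain ⟨t, htinf⟩ := Finite.exists_infinite_fiber f
    have htinf' : (f ⁻¹' {t}).Infinite := Set.infinite_coe_iff.mp htinf
    have hmemall : ∀ n, t ∈ Ylev G Es W n := by
      intro n
      obtain ⟨m, hm, hlt⟩ := htinf'.exists_gt n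
      have : f m = t := hm
      exact Ylev_anti G Es W (le_of_lt hlt) (this ▸ hf2 m)
    obtain ⟨m, hm⟩ : ∃ m, f m = t := by
      rcases htinf'.nonempty with ⟨m, hm⟩; exact ⟨m, hm⟩
    exact ⟨t, hm ▸ hf1 m, Set.mem_iInter.mpr hmemall⟩
  · by_cases hEs : (s, t) ∈ Es
    · exact Or.inl hEs
    · right
      refine Set.mem_iInter.mpr fun n => ?_
      rcases (hclause n).2.2 hs1 t ht with h' | h'
      · exact absurd h' hEs
      · exact h'

/-- Memoryless player-1 choice: attractor move inside `Rset`, safe move inside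
`Yset`, arbitrary otherwise. -/
noncomputable def sig (G : DetGame S) (Es : Set (S × S)) (W : Set S) (s : S) : S :=
  if h : s ∈ G.S1 ∧ ∃ t, G.E s t ∧ t ∈ Rlev G Es (sInf {n | s ∈ Rlev G Es n} - 1) then
    h.2.choose
  else if h : ∃ t, G.E s t ∧ t ∈ Yset G Es W then h.choose
  else (G.exists_succ s).choose

lemma sig_edge (G : DetGame S) (Es : Set (S × S)) (W : Set S) (s : S) :
    G.E s (sig G Es W s) := by
  unfold sig
  split_ifs with h1 h2
  · exact h1.2.choose_spec.1
  · exact h2.choose_spec.1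
  · exact (G.exists_succ s).choose_spec

lemma sig_Rlev {G : DetGame S} {Es : Set (S × S)} (W : Set S) {s : S} {n : ℕ}
    (hs1 : s ∈ G.S1) (hn : s ∈ Rlev G Es (n + 1)) :
    sig G Es W s ∈ Rlev G Es n := by
  set r := sInf {m | s ∈ Rlev G Es m} with hr
  have hne : {m | s ∈ Rlev G Es m}.Nonempty := ⟨n + 1, hn⟩
  have hmem : s ∈ Rlev G Es r := Nat.sInf_mem hne
  have hrpos : r ≠ 0 := by
    intro h0
    rw [h0] at hmem
    exact hmem
  obtain ⟨m, hm⟩ : ∃ m, r = m + 1 := ⟨r - 1, by omega⟩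
  have hex : ∃ t, G.E s t ∧ t ∈ Rlev G Es (r - 1) := by
    rw [hm] at hmem
    rcases mem_Rlev_succ_iff.mp hmem with ⟨_, t, ht, htm⟩ | ⟨hns, _⟩
    · exact ⟨t, ht, by rw [hm]; simpa using htm⟩
    · exact absurd hs1 hns
  have hcond : s ∈ G.S1 ∧ ∃ t, G.E s t ∧ t ∈ Rlev G Es (sInf {n | s ∈ Rlev G Es n} - 1) :=
    ⟨hs1, hex⟩
  have hσ : sig G Es W s ∈ Rlev G Es (r - 1) := by
    unfold sig
    rw [dif_pos hcond]
    exact hcond.2.choose_spec.2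
  have hle : r ≤ n + 1 := Nat.sInf_le hn
  exact Rlev_mono G Es (by omega) hσ

lemma sig_Yset {G : DetGame S} {Es : Set (S × S)} {W : Set S} {s : S}
    (hR : s ∉ Rset G Es) (hex : ∃ t, G.E s t ∧ t ∈ Yset G Es W) :
    sig G Es W s ∈ Yset G Es W := by
  have hemp : {n | s ∈ Rlev G Es n} = ∅ := by
    ext n
    simp only [Set.mem_setOf_eq, Set.mem_empty_iff_false, iff_false]
    exact fun h => hR (mem_Rset_of_lev h)
  have hcond1 : ¬(s ∈ G.S1 ∧ ∃ t, G.E s t ∧ t ∈ Rlev G Es (sInf {n | s ∈ Rlev G Es n} - 1)) := by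
    rintro ⟨-, t, -, htR⟩
    rw [hemp, Nat.sInf_empty] at htR
    exact htR
  unfold sig
  rw [dif_neg hcond1, dif_pos hex]
  exact hex.choose_spec.2

lemma no_Rlev {G : DetGame S} {Es : Set (S × S)} {W : Set S} {π : ℕ → S}
    (hplay : G.IsPlay π)
    (hσ : ∀ k, π k ∈ G.S1 → π (k + 1) = sig G Es W (π k))
    (hfree : ∀ k, (π k, π (k + 1)) ∉ Es) :
    ∀ n k, π k ∉ Rlev G Es n := by
  intro n
  induction n with
  | zero => intro k h; exact h
  | succ n ih =>
    intro k h
    by_cases hs1 : π k ∈ G.S1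
    · have h2 := sig_Rlev W hs1 h
      rw [← hσ k hs1] at h2
      exact ih (k + 1) h2
    · rcases mem_Rlev_succ_iff.mp h with ⟨hs1', -⟩ | ⟨-, hall⟩
      · exact hs1 hs1'
      · rcases hall _ (hplay k) with hEs | hRl
        · exact hfree k hEs
        · exact ih (k + 1) hRl

lemma no_Rset {G : DetGame S} {Es : Set (S × S)} {W : Set S} {π : ℕ → S}
    (hplay : G.IsPlay π)
    (hσ : ∀ k, π k ∈ G.S1 → π (k + 1) = sig G Es W (π k))
    (hfree : ∀ k, (π k, π (k + 1)) ∉ Es) :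
    ∀ k, π k ∉ Rset G Es := by
  intro k h
  rcases Set.mem_iUnion.mp h with ⟨n, hn⟩
  exact no_Rlev hplay hσ hfree n k hn

lemma sound_Yset {G : DetGame S} {Es : Set (S × S)} {W : Set S} {π : ℕ → S}
    (hplay : G.IsPlay π)
    (hσ : ∀ k, π k ∈ G.S1 → π (k + 1) = sig G Es W (π k))
    (hfree : ∀ k, (π k, π (k + 1)) ∉ Es)
    (h0 : π 0 ∈ Yset G Es W) :
    ∀ k, π k ∈ Yset G Es W := by
  intro k
  induction k with
  | zero => exact h0
  | succ k ih =>
    have hR : π k ∉ Rset G Es := no_Rset hplay hσ hfree k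
    obtain ⟨hW, hA, hB⟩ := Yset_succ ih hR
    by_cases hs1 : π k ∈ G.S1
    · rw [hσ k hs1]
      exact sig_Yset hR (hA hs1)
    · rcases hB hs1 _ (hplay k) with hEs | hY
      · exact absurd hEs (hfree k)
      · exact hY

lemma sound_W {G : DetGame S} {Es : Set (S × S)} {W : Set S} {π : ℕ → S}
    (hplay : G.IsPlay π)
    (hσ : ∀ k, π k ∈ G.S1 → π (k + 1) = sig G Es W (π k))
    (hfree : ∀ k, (π k, π (k + 1)) ∉ Es)
    (h0 : π 0 ∈ Yset G Es W) :
    ∀ k, π k ∈ W := by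
  intro k
  exact (Yset_succ (sound_Yset hplay hσ hfree h0 k)
    (no_Rset hplay hσ hfree k)).1

lemma outcome_zero (G : DetGame S) (s : S) (α : Strat1 G) (β : Strat2 G) :
    G.outcome s α β 0 = s := rfl

lemma outcome_succ (G : DetGame S) (s : S) (α : Strat1 G) (β : Strat2 G) (k : ℕ) :
    G.outcome s α β (k + 1) =
      if G.outcome s α β k ∈ G.S1 then
        α.f (G.histPair α β s k).1 (G.outcome s α β k)
      else β.f (G.histPair α β s k).1 (G.outcome s α β k) := rfl

lemma outcome_isPlay (G : DetGame S) (s : S) (α : Strat1 G) (β : Strat2 G) :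
    G.IsPlay (G.outcome s α β) := by
  intro k
  rw [outcome_succ]
  by_cases h : G.outcome s α β k ∈ G.S1
  · rw [if_pos h]; exact α.valid _ _ h
  · rw [if_neg h]; exact β.valid _ _ h

/-- Memoryless spoiler strategy for player 2. -/
noncomputable def bet (G : DetGame S) (Es : Set (S × S)) (W : Set S) : Strat2 G where
  f := fun _ s =>
    if h : ∃ t, G.E s t ∧ (s, t) ∉ Es ∧
        t ∉ Ylev G Es W (sInf {n | s ∉ Ylev G Es W n} - 1) then h.choose
    else if h : ∃ t, G.E s t ∧ (s, t) ∉ Es ∧ t ∉ Rset G Es then h.choose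
    else (G.exists_succ s).choose
  valid := by
    intro h s _
    split_ifs with h1 h2
    · exact h1.choose_spec.1
    · exact h2.choose_spec.1
    · exact (G.exists_succ s).choose_spec

lemma ynot {G : DetGame S} {Es : Set (S × S)} {W : Set S} {s : S}
    (h : s ∉ Yset G Es W) :
    ∃ m, sInf {n | s ∉ Ylev G Es W n} = m + 1 ∧ s ∉ Ylev G Es W (m + 1) := by
  have hne : {n | s ∉ Ylev G Es W n}.Nonempty := by
    by_contra hc
    apply h
    refine Set.mem_iInter.mpr fun n => ?_
    by_contra hn
    exact hc ⟨n, hn⟩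
  have hmem : s ∉ Ylev G Es W (sInf {n | s ∉ Ylev G Es W n}) := Nat.sInf_mem hne
  have hpos : sInf {n | s ∉ Ylev G Es W n} ≠ 0 := by
    intro h0
    rw [h0] at hmem
    exact hmem (Set.mem_univ s)
  exact ⟨sInf {n | s ∉ Ylev G Es W n} - 1, by omega, by
    have : sInf {n | s ∉ Ylev G Es W n} - 1 + 1 = sInf {n | s ∉ Ylev G Es W n} := by omega
    rw [this]; exact hmem⟩

lemma complete {G : DetGame S} {Es : Set (S × S)} {Φ : Set (ℕ → S)} {sI : S}
    (hEs : Es ⊆ G.E2)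
    (hsuff : sI ∈ G.Win1 (G.AssumeSafe Es Φ)) :
    sI ∈ Yset G Es (G.Win12 Φ) := by
  set W : Set S := G.Win12 Φ with hWdef
  by_contra h0
  obtain ⟨α, hα⟩ := hsuff
  set β : Strat2 G := bet G Es W with hβ
  set π : ℕ → S := G.outcome sI α β with hπ
  have hplay : G.IsPlay π := outcome_isPlay G sI α β
  have hπ0 : π 0 = sI := rfl
  -- the move of β at a player-2 state
  have hbmove : ∀ k, π k ∉ G.S1 → π (k + 1) =
      (if h : ∃ t, G.E (π k) t ∧ (π k, t) ∉ Es ∧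
          t ∉ Ylev G Es W (sInf {n | π k ∉ Ylev G Es W n} - 1) then h.choose
        else if h : ∃ t, G.E (π k) t ∧ (π k, t) ∉ Es ∧ t ∉ Rset G Es then h.choose
        else (G.exists_succ (π k)).choose) := by
    intro k hk
    rw [hπ, outcome_succ, if_neg hk]
    rfl
  -- escape invariant: staying out of Rset, never using Es edges
  have hesc : ∀ k, π k ∉ Rset G Es → (π k, π (k + 1)) ∉ Es ∧ π (k + 1) ∉ Rset G Es := by
    intro k hR
    by_cases hs1 : π k ∈ G.S1
    · constructor
      · intro hmem
        have := (hEs hmem).2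
        exact this hs1
      · exact not_mem_Rset_S1 hR hs1 (hplay k)
    · rw [hbmove k hs1]
      by_cases hc1 : ∃ t, G.E (π k) t ∧ (π k, t) ∉ Es ∧
          t ∉ Ylev G Es W (sInf {n | π k ∉ Ylev G Es W n} - 1)
      · rw [dif_pos hc1]
        obtain ⟨ht, hnEs, hnY⟩ := hc1.choose_spec
        refine ⟨hnEs, fun hmem => hnY (Rset_subset_Ylev G Es W _ hmem)⟩
      · rw [dif_neg hc1]
        have hc2 : ∃ t, G.E (π k) t ∧ (π k, t) ∉ Es ∧ t ∉ Rset G Es :=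
          not_mem_Rset_S2 hR hs1
        rw [dif_pos hc2]
        obtain ⟨ht, hnEs, hnR⟩ := hc2.choose_spec
        exact ⟨hnEs, hnR⟩
  have hR0 : π 0 ∉ Rset G Es := fun h => h0 (Rset_subset_Yset G Es W h)
  have hRall : ∀ k, π k ∉ Rset G Es := by
    intro k
    induction k with
    | zero => exact hR0
    | succ k ih => exact (hesc k ih).2
  have hfree : ∀ k, (π k, π (k + 1)) ∉ Es := fun k => (hesc k (hRall k)).1
  -- rank decrease while out of Yset and inside W
  have hdec : ∀ k, π k ∉ Yset G Es W → π k ∈ W →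
      π (k + 1) ∉ Yset G Es W ∧
        sInf {n | π (k+1) ∉ Ylev G Es W n} < sInf {n | π k ∉ Ylev G Es W n} := by
    intro k hnY hW
    obtain ⟨m, hm, hns⟩ := ynot hnY
    have hns' : ¬(π k ∈ Rset G Es ∨ (π k ∈ W ∧
        (π k ∈ G.S1 → ∃ t, G.E (π k) t ∧ t ∈ Ylev G Es W m) ∧
        (π k ∉ G.S1 → ∀ t, G.E (π k) t → ((π k, t) ∈ Es ∨ t ∈ Ylev G Es W m)))) :=
      fun hc => hns (mem_Ylev_succ_iff.mpr hc)
    obtain ⟨hnR, hclause⟩ := not_or.mp hns'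
    have hkey : π (k + 1) ∉ Ylev G Es W (sInf {n | π k ∉ Ylev G Es W n} - 1) := by
      have he : sInf {n | π k ∉ Ylev G Es W n} - 1 = m := by omega
      by_cases hs1 : π k ∈ G.S1
      · -- α moves; all successors are outside Ylev m
        have hB : π k ∉ G.S1 → ∀ t, G.E (π k) t → ((π k, t) ∈ Es ∨ t ∈ Ylev G Es W m) :=
          fun hc => absurd hs1 hc
        have hnA : ¬(π k ∈ G.S1 → ∃ t, G.E (π k) t ∧ t ∈ Ylev G Es W m) := by
          intro hA
          exact (hclause ⟨hW, hA, hB⟩).elim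
        push_neg at hnA
        rw [he]
        exact hnA.2 _ (hplay k)
      · -- β moves via branch 1
        have hA : π k ∈ G.S1 → ∃ t, G.E (π k) t ∧ t ∈ Ylev G Es W m :=
          fun hc => absurd hc hs1
        have hnB : ¬(π k ∉ G.S1 → ∀ t, G.E (π k) t → ((π k, t) ∈ Es ∨ t ∈ Ylev G Es W m)) := by
          intro hB
          exact (hclause ⟨hW, hA, hB⟩).elim
        push_neg at hnB
        obtain ⟨-, t, ht, hnt1, hnt2⟩ := hnB
        have hc1 : ∃ t, G.E (π k) t ∧ (π k, t) ∉ Es ∧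
            t ∉ Ylev G Es W (sInf {n | π k ∉ Ylev G Es W n} - 1) := by
          refine ⟨t, ht, hnt1, ?_⟩
          rw [hm]
          simpa using hnt2
        rw [hbmove k hs1, dif_pos hc1]
        exact hc1.choose_spec.2.2
    constructor
    · intro hc
      exact hkey (Set.mem_iInter.mp hc _)
    · have : sInf {n | π (k+1) ∉ Ylev G Es W n} ≤
        sInf {n | π k ∉ Ylev G Es W n} - 1 := Nat.sInf_le hkey
      omega
  -- eventually the play leaves W
  have hreach : ∃ j, π j ∉ W := by
    have main : ∀ n k, π k ∉ Yset G Es W →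
        sInf {m | π k ∉ Ylev G Es W m} ≤ n → ∃ j, π j ∉ W := by
      intro n
      induction n with
      | zero =>
        intro k hk hle
        obtain ⟨m, hm, -⟩ := ynot hk
        omega
      | succ n ih =>
        intro k hk hle
        by_cases hW : π k ∈ W
        · obtain ⟨h1, h2⟩ := hdec k hk hW
          exact ih (k + 1) h1 (by omega)
        · exact ⟨k, hW⟩
    exact main (sInf {m | π 0 ∉ Ylev G Es W m}) 0 (hπ0 ▸ h0) le_rfl
  -- contradiction with the AssumeSafe objective
  rcases hα β with ⟨i, hi⟩ | hsafe
  · exact hfree i hi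
  · obtain ⟨j, hj⟩ := hreach
    exact hj (hsafe j)

end CHJ


theorem safety_assumption_sufficient {S I O : Type} [Fintype S] [Fintype I]
    [Fintype O] (SG : SynthGame S I O) (p : S → ℕ)
    (φ : Set (ℕ → Set I × Set O)) (hfor : SG.IsGameFor p φ)
    (Es : Set (S × S)) (hEs : Es ⊆ SG.toDetGame.E2)
    (hsuff : SG.toDetGame.SafeSufficient Es SG.sI (ParityObj p)) :
    SufficientAssumption (safetyCl (prefixes φ)) (SG.psiSafety Es) ∧
    (IsSafetyLang φ → SufficientAssumption φ (SG.psiSafety Es)) := by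
  classical
  set G := SG.toDetGame with hG
  set W : Set S := G.Win12 (ParityObj p) with hWdef
  set σ : S → S := CHJ.sig G Es W with hσdef
  have hsIY : SG.sI ∈ CHJ.Yset G Es W := CHJ.complete hEs hsuff
  set T : Moore I O :=
    { Q := S
      fin := inferInstance
      qI := SG.sI
      tr := fun q i =>
        if h : σ q ∉ G.S1 then (SG.complete2 (σ q) h i).choose
        else (G.exists_succ (σ q)).choose
      out := fun q => SG.labO (σ q) } with hT
  have hmain : T.lang ⊆ (SG.psiSafety Es)ᶜ ∪ safetyCl (prefixes φ) := by
    rintro x ⟨w, rfl⟩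
    by_cases hψ : T.output w ∈ SG.psiSafety Es
    swap
    · exact Or.inl hψ
    right
    -- basic facts about the run of the transducer
    have hq0 : T.run w 0 = SG.sI := rfl
    have hsig2 : ∀ q : S, q ∈ G.S1 → σ q ∉ G.S1 := by
      intro q hq
      rcases SG.bipartite _ _ (CHJ.sig_edge G Es W q) with ⟨-, h2⟩ | ⟨h1, -⟩
      · exact h2
      · exact absurd hq h1
    have hstep : ∀ n, T.run w n ∈ G.S1 →
        G.E (σ (T.run w n)) (T.run w (n + 1)) ∧
          SG.labI (T.run w (n + 1)) = w n ∧ T.run w (n + 1) ∈ G.S1 := by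
      intro n hn
      have hσ2 := hsig2 _ hn
      have htr : T.run w (n + 1) = (SG.complete2 (σ (T.run w n)) hσ2 (w n)).choose := by
        show T.tr (T.run w n) (w n) = _
        show (if h : σ (T.run w n) ∉ G.S1 then (SG.complete2 (σ (T.run w n)) h (w n)).choose
          else (G.exists_succ (σ (T.run w n))).choose) = _
        rw [dif_pos hσ2]
      obtain ⟨hE, hlab⟩ := (SG.complete2 (σ (T.run w n)) hσ2 (w n)).choose_spec
      rw [htr]
      refine ⟨hE, hlab, ?_⟩
      rcases SG.bipartite _ _ hE with ⟨h1, -⟩ | ⟨-, h2⟩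
      · exact absurd h1 hσ2
      · exact h2
    have hrun : ∀ n, T.run w n ∈ G.S1 := by
      intro n
      induction n with
      | zero => exact hq0 ▸ SG.sI_mem
      | succ n ih => exact (hstep n ih).2.2
    -- the play generated by the transducer
    set π0 : ℕ → S := fun k =>
      if k % 2 = 0 then T.run w (k / 2) else σ (T.run w (k / 2)) with hπ0def
    have hπ0e : ∀ n, π0 (2 * n) = T.run w n := by
      intro n
      have h1 : (2 * n) % 2 = 0 := by omega
      have h2 : (2 * n) / 2 = n := by omega
      simp [hπ0def, h1, h2]
    have hπ0o : ∀ n, π0 (2 * n + 1) = σ (T.run w n) := by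
      intro n
      have h1 : ¬((2 * n + 1) % 2 = 0) := by omega
      have h2 : (2 * n + 1) / 2 = n := by omega
      simp [hπ0def, h1, h2]
    have hπ00 : π0 0 = SG.sI := by
      have := hπ0e 0
      simpa [hq0] using this
    have hplay0 : G.IsPlay π0 := by
      intro k
      rcases Nat.even_or_odd k with ⟨m, hm⟩ | ⟨m, hm⟩
      · have e1 : π0 k = T.run w m := by rw [show k = 2 * m by omega, hπ0e]
        have e2 : π0 (k + 1) = σ (T.run w m) := by
          rw [show k + 1 = 2 * m + 1 by omega, hπ0o]
        rw [e1, e2]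
        exact CHJ.sig_edge G Es W (T.run w m)
      · have e1 : π0 k = σ (T.run w m) := by rw [show k = 2 * m + 1 by omega, hπ0o]
        have e2 : π0 (k + 1) = T.run w (m + 1) := by
          rw [show k + 1 = 2 * (m + 1) by omega, hπ0e]
        rw [e1, e2]
        exact (hstep m (hrun m)).1
    have hσfollow : ∀ k, π0 k ∈ G.S1 → π0 (k + 1) = σ (π0 k) := by
      intro k hk
      rcases Nat.even_or_odd k with ⟨m, hm⟩ | ⟨m, hm⟩
      · have e1 : π0 k = T.run w m := by rw [show k = 2 * m by omega, hπ0e]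
        have e2 : π0 (k + 1) = σ (T.run w m) := by
          rw [show k + 1 = 2 * m + 1 by omega, hπ0o]
        rw [e1, e2]
      · have e1 : π0 k = σ (T.run w m) := by rw [show k = 2 * m + 1 by omega, hπ0o]
        rw [e1] at hk
        exact absurd hk (hsig2 _ (hrun m))
    have hword0 : SG.word π0 = T.output w := by
      funext n
      have e1 : π0 (2 * n + 2) = T.run w (n + 1) := by
        rw [show 2 * n + 2 = 2 * (n + 1) by ring, hπ0e]
      have e2 : π0 (2 * n + 1) = σ (T.run w n) := hπ0o n
      show (SG.labI (π0 (2 * n + 2)), SG.labO (π0 (2 * n + 1))) = (w n, T.out (T.run w n))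
      rw [e1, e2, (hstep n (hrun n)).2.1]
    -- the witnessing play of the environment assumption equals the generated play
    obtain ⟨π, hplayπ, hπI, hwordπ, hfreeπ⟩ := hψ
    have heq : ∀ n, π (2 * n) = π0 (2 * n) ∧ π (2 * n + 1) = π0 (2 * n + 1) := by
      intro n
      induction n with
      | zero =>
        have h00 : π 0 = π0 0 := by rw [hπI, hπ00]
        have hodd : π 1 = π0 1 := by
          have hs1 : π0 0 ∈ G.S1 := by rw [hπ00]; exact SG.sI_mem
          have ed1 : G.E (π0 0) (π 1) := by rw [← h00]; exact hplayπ 0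
          have ed2 : G.E (π0 0) (π0 1) := hplay0 0
          have hlab : SG.labO (π 1) = SG.labO (π0 1) := by
            have hc := congrArg Prod.snd (congrFun hwordπ 0)
            have hc2 := congrArg Prod.snd (congrFun hword0 0)
            simp only [SynthGame.word, Moore.output] at hc hc2
            rw [show (2 : ℕ) * 0 + 1 = 1 by ring] at hc hc2
            rw [hc, hc2]
          exact SG.labelDet1 _ _ _ hs1 ed1 ed2 hlab
        exact ⟨h00, by simpa using hodd⟩
      | succ n ih =>
        obtain ⟨ihe, iho⟩ := ih
        have hs2 : π0 (2 * n + 1) ∉ G.S1 := by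
          rw [hπ0o n]; exact hsig2 _ (hrun n)
        have heven : π (2 * n + 2) = π0 (2 * n + 2) := by
          have ed1 : G.E (π0 (2 * n + 1)) (π (2 * n + 2)) := by
            rw [← iho]; exact hplayπ (2 * n + 1)
          have ed2 : G.E (π0 (2 * n + 1)) (π0 (2 * n + 2)) := hplay0 (2 * n + 1)
          have hlab : SG.labI (π (2 * n + 2)) = SG.labI (π0 (2 * n + 2)) := by
            have hc := congrArg Prod.fst (congrFun hwordπ n)
            have hc2 := congrArg Prod.fst (congrFun hword0 n)
            simp only [SynthGame.word, Moore.output] at hc hc2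
            rw [hc, hc2]
          exact SG.labelDet2 _ _ _ hs2 ed1 ed2 hlab
        have hs1 : π0 (2 * n + 2) ∈ G.S1 := by
          rw [show 2 * n + 2 = 2 * (n + 1) by ring, hπ0e]; exact hrun (n + 1)
        have hodd : π (2 * n + 3) = π0 (2 * n + 3) := by
          have ed1 : G.E (π0 (2 * n + 2)) (π (2 * n + 3)) := by
            rw [← heven]; exact hplayπ (2 * n + 2)
          have ed2 : G.E (π0 (2 * n + 2)) (π0 (2 * n + 3)) := hplay0 (2 * n + 2)
          have hlab : SG.labO (π (2 * n + 3)) = SG.labO (π0 (2 * n + 3)) := by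
            have hc := congrArg Prod.snd (congrFun hwordπ (n + 1))
            have hc2 := congrArg Prod.snd (congrFun hword0 (n + 1))
            simp only [SynthGame.word, Moore.output] at hc hc2
            rw [show 2 * (n + 1) + 1 = 2 * n + 3 by ring] at hc hc2
            rw [hc, hc2]
          exact SG.labelDet1 _ _ _ hs1 ed1 ed2 hlab
        constructor
        · rw [show 2 * (n + 1) = 2 * n + 2 by ring]; exact heven
        · rw [show 2 * (n + 1) + 1 = 2 * n + 3 by ring]; exact hodd
    have heqall : ∀ k, π k = π0 k := by
      intro k
      rcases Nat.even_or_odd k with ⟨m, hm⟩ | ⟨m, hm⟩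
      · rw [show k = 2 * m by omega]; exact (heq m).1
      · rw [show k = 2 * m + 1 by omega]; exact (heq m).2
    have hfree0 : ∀ k, (π0 k, π0 (k + 1)) ∉ Es := by
      intro k
      rw [← heqall k, ← heqall (k + 1)]
      exact hfreeπ k
    have hWall : ∀ k, π0 k ∈ W :=
      CHJ.sound_W hplay0 hσfollow hfree0 (by rw [hπ00]; exact hsIY)
    -- every prefix of the produced word is a prefix of a word of φ
    show ∀ n, wordPrefix (T.output w) n ∈ prefixes φ
    intro n
    obtain ⟨α', β', hpar⟩ := hWall (2 * n)
    set π' : ℕ → S := G.outcome (π0 (2 * n)) α' β' with hπ'def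
    have hplay' : G.IsPlay π' := CHJ.outcome_isPlay G _ α' β'
    have hπ'0 : π' 0 = π0 (2 * n) := rfl
    set π'' : ℕ → S := fun k => if k < 2 * n then π0 k else π' (k - 2 * n) with hπ''def
    have hπ''le : ∀ k, k ≤ 2 * n → π'' k = π0 k := by
      intro k hk
      by_cases h : k < 2 * n
      · simp [hπ''def, h]
      · have hk2 : k = 2 * n := by omega
        rw [hk2]
        simp [hπ''def, hπ'0]
    have hπ''ge : ∀ k, 2 * n ≤ k → π'' k = π' (k - 2 * n) := by
      intro k hk
      by_cases h : k < 2 * n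
      · omega
      · simp [hπ''def, h]
    have hplay'' : G.IsPlay π'' := by
      intro k
      by_cases hk : k + 1 ≤ 2 * n
      · rw [hπ''le k (by omega), hπ''le (k + 1) hk]
        exact hplay0 k
      · have hk2 : 2 * n ≤ k := by omega
        rw [hπ''ge k hk2, hπ''ge (k + 1) (by omega),
          show k + 1 - 2 * n = (k - 2 * n) + 1 by omega]
        exact hplay' _
    have h0'' : π'' 0 = SG.sI := by
      rw [hπ''le 0 (by omega), hπ00]
    have hinf : infSet π'' = infSet π' := by
      ext t
      constructor
      · intro h N
        obtain ⟨k, hk1, hk2⟩ := h (N + 2 * n)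
        refine ⟨k - 2 * n, by omega, ?_⟩
        rw [hπ''ge k (by omega)] at hk2
        exact hk2
      · intro h N
        obtain ⟨k, hk1, hk2⟩ := h N
        refine ⟨k + 2 * n, by omega, ?_⟩
        rw [hπ''ge (k + 2 * n) (by omega), show k + 2 * n - 2 * n = k by omega]
        exact hk2
    have hpar'' : π'' ∈ ParityObj p := by
      show Even (sInf (p '' infSet π''))
      rw [hinf]
      exact hpar
    have hφ : SG.word π'' ∈ φ := (hfor π'' hplay'' h0'').mp hpar''
    have hwpre : wordPrefix (T.output w) n = wordPrefix (SG.word π'') n := by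
      unfold wordPrefix
      apply List.map_congr_left
      intro i hi
      have hin : i < n := List.mem_range.mp hi
      have e1 : π'' (2 * i + 1) = π0 (2 * i + 1) := hπ''le _ (by omega)
      have e2 : π'' (2 * i + 2) = π0 (2 * i + 2) := hπ''le _ (by omega)
      show T.output w i = (SG.labI (π'' (2 * i + 2)), SG.labO (π'' (2 * i + 1)))
      rw [e1, e2, ← hword0]
      rfl
    refine ⟨SG.word π'', hφ, ?_⟩
    have hlen : (wordPrefix (T.output w) n).length = n := by
      simp [wordPrefix]
    rw [hlen, hwpre]
  constructor
  · exact ⟨T, hmain⟩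
  · intro hsafe
    show MooreRealizable ((SG.psiSafety Es)ᶜ ∪ φ)
    rw [hsafe]
    exact ⟨T, hmain⟩
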